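/- Let X_1, X_2, ... be an AI(α_n) sequence with common marginal supported on a compact standard set S (constants δ, λ), and assume ∑_{n≥1} α_n / (n^β log n) < ∞ for every β > 1. Then almost surely, limsup_{n→∞} (n / log n)^{1/d} d_H({X_1,...,X_n}, S) ≤ (2/(δ ω_d))^{1/d}. -/

import Mathlib

open scoped ENNReal NNReal
open MeasureTheory Metric Filter

noncomputable section

abbrev Euc (d : ℕ) := EuclideanSpace ℝ (Fin d)


lemma star_aux {E : Type*} [MeasurableSpace E] (μ : Measure E) [SigmaFinite μ]
    (h : E → ℝ≥0∞) :
    ∀ (n : ℕ) (F : (Fin n → E) → ℝ≥0∞), Measurable F →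
      (∀ x, F x ≤ ∏ i, h (x i)) →
      ∫⁻ x, F x ∂(Measure.pi fun _ : Fin n => μ) ≤ (∫⁻ y, h y ∂μ) ^ n := by
  intro n
  induction n with
  | zero =>
      intro F hFm hFle
      calc ∫⁻ x, F x ∂(Measure.pi fun _ : Fin 0 => μ)
          ≤ ∫⁻ _x, 1 ∂(Measure.pi fun _ : Fin 0 => μ) := by
            refine lintegral_mono fun x => ?_
            simpa using hFle x
        _ = 1 := by simp [Measure.pi_univ]
        _ = (∫⁻ y, h y ∂μ) ^ 0 := by simp
  | succ n IH =>
      intro F hFm hFle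
      set I : ℝ≥0∞ := ∫⁻ y, h y ∂μ with hI
      -- move to the product space
      set e := MeasurableEquiv.piFinSuccAbove (fun _ : Fin (n + 1) => E) 0 with he
      have hmp := (measurePreserving_piFinSuccAbove (fun _ : Fin (n + 1) => μ) 0).symm e
      set G : E × (Fin n → E) → ℝ≥0∞ := fun p => F (e.symm p) with hG
      have hGm : Measurable G := hFm.comp e.symm.measurable
      have hGle : ∀ a b, G (a, b) ≤ h a * ∏ i, h (b i) := by
        intro a b
        refine (hFle _).trans_eq ?_
        have : ∀ j : Fin n, e.symm (a, b) ((0 : Fin (n+1)).succAbove j) = b j := by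
          intro j
          simp [he, MeasurableEquiv.piFinSuccAbove, Fin.insertNth_apply_succAbove]
        rw [Fin.prod_univ_succAbove (fun i => h (e.symm (a, b) i)) 0]
        have h0 : e.symm (a, b) 0 = a := by
          simp [he, MeasurableEquiv.piFinSuccAbove]
        rw [h0]
        exact congrArg (fun z => h a * z)
          (Finset.prod_congr rfl fun j _ => by rw [this j])
      have hint : ∫⁻ x, F x ∂(Measure.pi fun _ : Fin (n+1) => μ)
          = ∫⁻ a, ∫⁻ b, G (a, b) ∂(Measure.pi fun _ : Fin n => μ) ∂μ := by
        rw [← hmp.lintegral_comp_emb e.symm.measurableEmbedding F]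
        exact MeasureTheory.lintegral_prod G hGm.aemeasurable
      set m : E → ℝ≥0∞ := fun a => ∫⁻ b, G (a, b) ∂(Measure.pi fun _ : Fin n => μ) with hm
      have hmm : Measurable m := hGm.lintegral_prod_right'
      have hC0 : ∀ a, h a ≠ ∞ → m a ≤ h a * I ^ n := by
        intro a ha
        rcases eq_or_ne (h a) 0 with h0 | h0
        · have : ∀ b, G (a, b) = 0 := by
            intro b
            have := hGle a b
            rw [h0, zero_mul] at this
            exact le_antisymm this bot_le
          simp [hm, this, h0]
        · set t := h a with ht
          have htinv : t⁻¹ * t = 1 := ENNReal.inv_mul_cancel h0 ha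
          set G' : (Fin n → E) → ℝ≥0∞ := fun b => t⁻¹ * G (a, b) with hG'
          have hG'm : Measurable G' := (hGm.comp measurable_prodMk_left).const_mul _
          have hG'le : ∀ b, G' b ≤ ∏ i, h (b i) := by
            intro b
            calc t⁻¹ * G (a, b) ≤ t⁻¹ * (t * ∏ i, h (b i)) :=
                  mul_le_mul_right (hGle a b) _
              _ = ∏ i, h (b i) := by rw [← mul_assoc, htinv, one_mul]
          have := IH G' hG'm hG'le
          have hGa : ∀ b, G (a, b) = t * G' b := by
            intro b
            rw [hG', ← mul_assoc, ENNReal.mul_inv_cancel h0 ha, one_mul]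
          calc m a = ∫⁻ b, t * G' b ∂(Measure.pi fun _ : Fin n => μ) := by
                simp only [hm, hGa]
            _ = t * ∫⁻ b, G' b ∂(Measure.pi fun _ : Fin n => μ) :=
                lintegral_const_mul t hG'm
            _ ≤ t * I ^ n := mul_le_mul_right this t
      rw [hint]
      rcases eq_or_ne I 0 with hI0 | hIne
      · rcases Nat.eq_zero_or_pos n with hn0 | hn1
        · subst hn0
          have hmh : ∀ a, m a ≤ h a := by
            intro a
            rcases eq_or_ne (h a) ∞ with ha | ha
            · rw [ha]; exact le_top
            · simpa using hC0 a ha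
          calc ∫⁻ a, m a ∂μ ≤ ∫⁻ a, h a ∂μ := lintegral_mono hmh
            _ = I ^ (0 + 1) := by rw [pow_one]
        · have hIn : I ^ n = 0 := by simp [hI0, Nat.pos_iff_ne_zero.mp hn1]
          have hsub : ∀ a, m a ≠ 0 → h a = ∞ := by
            intro a hma
            by_contra hne
            have := hC0 a hne
            rw [hIn, mul_zero] at this
            exact hma (le_antisymm this bot_le)
          have hnull : μ {a | m a ≠ 0} = 0 := by
            have hMm : MeasurableSet {a | m a ≠ 0} := (hmm (measurableSet_singleton 0)).compl
            have hind : ∀ a, ({a | m a ≠ 0}).indicator (fun _ => (1 : ℝ≥0∞)) a ≤ h a := by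
              intro a
              refine Set.indicator_apply_le fun hmem => ?_
              rw [hsub a hmem]; exact le_top
            have h2 : μ {a | m a ≠ 0} ≤ I := by
              rw [hI, ← lintegral_indicator_one hMm]
              exact lintegral_mono hind
            rw [hI0] at h2
            exact le_antisymm h2 bot_le
          have : ∫⁻ a, m a ∂μ = 0 := by
            rw [lintegral_eq_zero_iff hmm]
            exact hnull
          rw [this, hI0]
          simp
      · -- I ≠ 0
        have hmb : ∀ a, m a ≤ h a * I ^ n := by
          intro a
          rcases eq_or_ne (h a) ∞ with ha | ha
          · rw [ha, ENNReal.top_mul (pow_ne_zero n hIne)]; exact le_top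
          · exact hC0 a ha
        rcases eq_or_ne (I ^ n) ∞ with hItop | hItop
        · have : I ^ (n + 1) = ∞ := by
            rw [pow_succ']
            exact ENNReal.mul_eq_top.2 (Or.inl ⟨hIne, hItop⟩)
          rw [this]; exact le_top
        · set c := I ^ n with hc
          have hcne : c ≠ 0 := pow_ne_zero n hIne
          set m' : E → ℝ≥0∞ := fun a => c⁻¹ * m a with hm'
          have hm'm : Measurable m' := hmm.const_mul _
          have hm'le : ∀ a, m' a ≤ h a := by
            intro a
            calc c⁻¹ * m a ≤ c⁻¹ * (h a * c) := mul_le_mul_right (hmb a) _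
              _ = h a := by
                rw [mul_comm (h a) c, ← mul_assoc, ENNReal.inv_mul_cancel hcne hItop, one_mul]
          have hint2 : ∫⁻ a, m' a ∂μ ≤ I := lintegral_mono hm'le
          have hma : ∀ a, m a = c * m' a := by
            intro a
            rw [hm', ← mul_assoc, ENNReal.mul_inv_cancel hcne hItop, one_mul]
          calc ∫⁻ a, m a ∂μ = ∫⁻ a, c * m' a ∂μ := by simp only [hma]
            _ = c * ∫⁻ a, m' a ∂μ := lintegral_const_mul c hm'm
            _ ≤ c * I := mul_le_mul_right hint2 c
            _ = I ^ (n + 1) := by rw [hc, pow_succ]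

lemma star_wrap {E : Type*} [MeasurableSpace E] (μ : Measure E) [SigmaFinite μ]
    (h : E → ℝ≥0∞) (n : ℕ) (c : ℝ≥0∞) (hc : c ≠ ∞)
    (G : (Fin n → E) → ℝ≥0∞) (hG : ∀ x, G x ≤ c * ∏ i, h (x i)) :
    ∫⁻ x, G x ∂(Measure.pi fun _ : Fin n => μ) ≤ c * (∫⁻ y, h y ∂μ) ^ n := by
  obtain ⟨F, hFm, hFle, hFeq⟩ :=
    exists_measurable_le_lintegral_eq (Measure.pi fun _ : Fin n => μ) G
  rcases eq_or_ne c 0 with hc0 | hc0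
  · have : ∀ x, G x = 0 := fun x => le_antisymm (by simpa [hc0] using hG x) bot_le
    simp [this]
  · have hF1 : ∀ x, c⁻¹ * F x ≤ ∏ i, h (x i) := by
      intro x
      calc c⁻¹ * F x ≤ c⁻¹ * (c * ∏ i, h (x i)) :=
            mul_le_mul_right ((hFle x).trans (hG x)) _
        _ = ∏ i, h (x i) := by rw [← mul_assoc, ENNReal.inv_mul_cancel hc0 hc, one_mul]
    have := star_aux μ h n (fun x => c⁻¹ * F x) (hFm.const_mul _) hF1
    rw [lintegral_const_mul _ hFm] at this
    calc ∫⁻ x, G x ∂(Measure.pi fun _ : Fin n => μ)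
        = ∫⁻ x, F x ∂(Measure.pi fun _ : Fin n => μ) := hFeq
      _ = c * (c⁻¹ * ∫⁻ x, F x ∂(Measure.pi fun _ : Fin n => μ)) := by
          rw [← mul_assoc, ENNReal.mul_inv_cancel hc0 hc, one_mul]
      _ ≤ c * (∫⁻ y, h y ∂μ) ^ n := mul_le_mul_right this c

lemma cover_lemma {d : ℕ} (S : Set (EuclideanSpace ℝ (Fin d)))
    (ν : Measure (EuclideanSpace ℝ (Fin d))) [IsProbabilityMeasure ν]
    (ρ c₀ : ℝ) (hρ : 0 < ρ) (hc₀ : 0 < c₀)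
    (hball : ∀ s ∈ S, ENNReal.ofReal c₀ ≤ ν (Metric.closedBall s ρ)) :
    ∃ T : Finset (EuclideanSpace ℝ (Fin d)), ↑T ⊆ S ∧
      (∀ s ∈ S, ∃ t ∈ T, dist s t ≤ 2 * ρ) ∧ (T.card : ℝ) * c₀ ≤ 1 := by
  classical
  set Q : Finset (EuclideanSpace ℝ (Fin d)) → Prop :=
    fun T => ↑T ⊆ S ∧ (T : Set (EuclideanSpace ℝ (Fin d))).Pairwise
      (fun a b => 2 * ρ < dist a b) with hQ
  have cardbound : ∀ T, Q T → (T.card : ℝ) * c₀ ≤ 1 := by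
    intro T hT
    have hdisj : (T : Set (EuclideanSpace ℝ (Fin d))).PairwiseDisjoint
        (fun t => Metric.closedBall t ρ) := by
      intro a ha b hb hab
      exact Metric.closedBall_disjoint_closedBall (by linarith [hT.2 ha hb hab])
    have hsum : ν (⋃ t ∈ T, Metric.closedBall t ρ) = ∑ t ∈ T, ν (Metric.closedBall t ρ) :=
      measure_biUnion_finset hdisj fun t _ => measurableSet_closedBall
    have hge : (T.card : ℝ≥0∞) * ENNReal.ofReal c₀ ≤ ν (⋃ t ∈ T, Metric.closedBall t ρ) := by
      rw [hsum]
      calc (T.card : ℝ≥0∞) * ENNReal.ofReal c₀ = ∑ _t ∈ T, ENNReal.ofReal c₀ := by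
            rw [Finset.sum_const, nsmul_eq_mul]
        _ ≤ ∑ t ∈ T, ν (Metric.closedBall t ρ) :=
            Finset.sum_le_sum fun t ht => hball t (hT.1 ht)
    have hle1 : (T.card : ℝ≥0∞) * ENNReal.ofReal c₀ ≤ 1 := by
      refine hge.trans ?_
      rw [← measure_univ (μ := ν)]
      exact measure_mono (Set.subset_univ _)
    have : ENNReal.ofReal ((T.card : ℝ) * c₀) ≤ 1 := by
      rw [ENNReal.ofReal_mul (by positivity), ENNReal.ofReal_natCast]
      exact hle1
    exact ENNReal.ofReal_le_one.mp this
  set M : ℕ := Nat.ceil (1 / c₀) with hM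
  have bnd : ∀ k, (∃ T, Q T ∧ T.card = k) → k ≤ M := by
    rintro k ⟨T, hT, rfl⟩
    have := cardbound T hT
    have h1 : (T.card : ℝ) ≤ 1 / c₀ := by
      rw [le_div_iff₀ hc₀]; exact this
    have h2 : (T.card : ℝ) ≤ (M : ℝ) := h1.trans (Nat.le_ceil _)
    exact_mod_cast h2
  set Pk : ℕ → Prop := fun k => ∃ T, Q T ∧ T.card = k with hPk
  have hP0 : Pk 0 := ⟨∅, ⟨by simp [hQ], by simp [hQ]⟩, by simp⟩
  set k₀ := Nat.findGreatest Pk M with hk₀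
  have hPk₀ : Pk k₀ := Nat.findGreatest_spec (Nat.zero_le M) hP0
  have hmax : ∀ k, Pk k → k ≤ k₀ := fun k hk => Nat.le_findGreatest (bnd k hk) hk
  obtain ⟨T, hT, hTcard⟩ := hPk₀
  refine ⟨T, hT.1, ?_, cardbound T hT⟩
  intro s hs
  by_contra hcon
  push_neg at hcon
  have hsT : s ∉ T := by
    intro hsmem
    have h0 := hcon s hsmem
    rw [dist_self] at h0
    linarith
  have hQ' : Q (insert s T) := by
    constructor
    · rw [Finset.coe_insert]
      exact Set.insert_subset hs hT.1
    · rw [Finset.coe_insert]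
      refine Set.pairwise_insert.mpr ⟨hT.2, fun b hb _ => ⟨hcon b hb, ?_⟩⟩
      rw [dist_comm]; exact hcon b hb
  have : k₀ + 1 ≤ k₀ := by
    have := hmax (k₀ + 1) ⟨insert s T, hQ', by rw [Finset.card_insert_of_notMem hsT, hTcard]⟩
    exact this
  omega

lemma ball_bound {d : ℕ} {Ω : Type*} [MeasurableSpace Ω]
    (P : Measure Ω) [IsProbabilityMeasure P]
    (X : ℕ → Ω → EuclideanSpace ℝ (Fin d)) (hX : ∀ i, Measurable (X i))
    (ν : Measure (EuclideanSpace ℝ (Fin d)))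
    (hmarg : ∀ i, Measure.map (X i) P = ν)
    (αn : ℕ → ℝ) (n : ℕ) (hn : 0 < n)
    (fj : (Fin n → EuclideanSpace ℝ (Fin d)) → ℝ≥0∞)
    (g : EuclideanSpace ℝ (Fin d) → ℝ≥0∞)
    (hfj : Measure.map (fun ω (i : Fin n) => X i.1 ω) P = volume.withDensity fj)
    (hg : ∀ i : Fin n, Measure.map (X i.1) P = volume.withDensity g)
    (hle : ∀ x : Fin n → EuclideanSpace ℝ (Fin d),
      fj x ≤ ENNReal.ofReal (1 + αn n) * ∏ i, g (x i))
    (A : Set (EuclideanSpace ℝ (Fin d))) (hA : MeasurableSet A) :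
    P {ω | ∀ i : Fin n, X i.1 ω ∈ A} ≤ ENNReal.ofReal (1 + αn n) * (ν A) ^ n := by
  have hXm : Measurable (fun ω (i : Fin n) => X i.1 ω) :=
    measurable_pi_lambda _ fun i => hX i.1
  have hpiA : MeasurableSet (Set.pi Set.univ fun _ : Fin n => A) :=
    MeasurableSet.univ_pi fun _ => hA
  have hpre : (fun ω (i : Fin n) => X i.1 ω) ⁻¹' (Set.pi Set.univ fun _ => A)
      = {ω | ∀ i : Fin n, X i.1 ω ∈ A} := by
    ext ω; simp [Set.mem_univ_pi]
  have hνg : ν = volume.withDensity g := by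
    rw [← hmarg ((⟨0, hn⟩ : Fin n) : Fin n).1]
    exact hg ⟨0, hn⟩
  have hνA : ν A = ∫⁻ y, A.indicator g y ∂volume := by
    rw [hνg, withDensity_apply g hA, lintegral_indicator hA g]
  have step1 : P {ω | ∀ i : Fin n, X i.1 ω ∈ A}
      = ∫⁻ x, (Set.pi Set.univ fun _ : Fin n => A).indicator fj x ∂volume := by
    rw [← hpre, ← Measure.map_apply hXm hpiA, hfj, withDensity_apply fj hpiA,
      lintegral_indicator hpiA fj]
  rw [step1, hνA]
  have hbound : ∀ x : Fin n → EuclideanSpace ℝ (Fin d),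
      (Set.pi Set.univ fun _ : Fin n => A).indicator fj x
        ≤ ENNReal.ofReal (1 + αn n) * ∏ i, A.indicator g (x i) := by
    intro x
    by_cases hx : x ∈ Set.pi Set.univ fun _ : Fin n => A
    · rw [Set.indicator_of_mem hx]
      refine (hle x).trans_eq ?_
      congr 1
      exact Finset.prod_congr rfl fun i _ =>
        (Set.indicator_of_mem (hx i (Set.mem_univ i)) g).symm
    · rw [Set.indicator_of_notMem hx]
      exact zero_le
  have := star_wrap (volume : Measure (EuclideanSpace ℝ (Fin d))) (A.indicator g) n
    (ENNReal.ofReal (1 + αn n)) ENNReal.ofReal_ne_top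
    ((Set.pi Set.univ fun _ : Fin n => A).indicator fj) hbound
  rw [← MeasureTheory.volume_pi] at this
  exact this

set_option maxHeartbeats 1000000 in
/-- For an `AI(α_n)` sequence with common marginal supported on a compact standard set `S`
(constants `δ, λ`) and `∑ α_n/(n^β log n) < ∞` for every `β > 1`, almost surely
`limsup (n/log n)^{1/d} d_H({X_1,…,X_n}, S) ≤ (2/(δ ω_d))^{1/d}`. -/
theorem statement5 {d : ℕ} (hd : 1 ≤ d) {Ω : Type*} [MeasurableSpace Ω]
    (P : Measure Ω) [IsProbabilityMeasure P]
    (X : ℕ → Ω → Euc d) (hX : ∀ i, Measurable (X i))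
    (S : Set (Euc d)) (hS : IsCompact S) (hSne : S.Nonempty)
    (ν : Measure (Euc d)) [IsProbabilityMeasure ν]
    (hmarg : ∀ i, Measure.map (X i) P = ν)
    (δ lam : ℝ) (hδ : 0 < δ) (hlam : 0 < lam)
    (ωd : ℝ) (hωd : ωd = (volume (Metric.closedBall (0 : Euc d) 1)).toReal)
    (hstd : ∀ s ∈ S, ∀ r : ℝ, 0 < r → r ≤ lam →
      ENNReal.ofReal (δ * ωd * r ^ d) ≤ ν (Metric.closedBall s r))
    (αn : ℕ → ℝ) (hα : ∀ n, 0 ≤ αn n)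
    (hAI : ∀ n : ℕ, ∃ fj : (Fin n → Euc d) → ℝ≥0∞, ∃ g : Euc d → ℝ≥0∞,
      Measure.map (fun ω (i : Fin n) => X i.1 ω) P = volume.withDensity fj ∧
      (∀ i : Fin n, Measure.map (X i.1) P = volume.withDensity g) ∧
      ∀ x : Fin n → Euc d, fj x ≤ ENNReal.ofReal (1 + αn n) * ∏ i, g (x i))
    (hsum : ∀ β : ℝ, 1 < β →
      Summable (fun n : ℕ => αn n / ((n : ℝ) ^ β * Real.log n)))
    (hin : ∀ i, ∀ᵐ ω ∂P, X i ω ∈ S) :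
    ∀ᵐ ω ∂P,
      Filter.limsup (fun n : ℕ =>
          ((n : ℝ) / Real.log n) ^ (1 / (d : ℝ)) *
            Metric.hausdorffDist (Set.range fun i : Fin n => X i.1 ω) S)
        Filter.atTop ≤ (2 / (δ * ωd)) ^ (1 / (d : ℝ)) := by
  have hd0 : (0:ℝ) < d := by exact_mod_cast hd
  have hdne : (d:ℝ) ≠ 0 := ne_of_gt hd0
  have hinvd : 0 < 1/(d:ℝ) := by positivity
  have hω : 0 < ωd := by
    rw [hωd]
    have h1 : 0 < volume (Metric.closedBall (0 : Euc d) 1) :=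
      measure_closedBall_pos volume (0 : Euc d) one_pos
    have h2 : volume (Metric.closedBall (0 : Euc d) 1) < ⊤ := measure_closedBall_lt_top
    exact ENNReal.toReal_pos h1.ne' h2.ne
  set D := δ * ωd with hD
  have hD0 : 0 < D := mul_pos hδ hω
  set L : ℝ := (2 / D) ^ (1/(d:ℝ)) with hL
  have hL0 : 0 < L := Real.rpow_pos_of_pos (by positivity) _
  have hEall : ∀ᵐ ω ∂P, ∀ i, X i ω ∈ S := ae_all_iff.2 hin
  have hSall0 : P ({ω | ∀ i, X i ω ∈ S}ᶜ) = 0 := by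
    rw [Set.compl_setOf]
    exact hEall
  have main : ∀ k : ℕ, ∀ᵐ ω ∂P,
      Filter.limsup (fun n : ℕ =>
          ((n : ℝ) / Real.log n) ^ (1 / (d : ℝ)) *
            Metric.hausdorffDist (Set.range fun i : Fin n => X i.1 ω) S)
        Filter.atTop ≤ L + 1/((k:ℝ)+1) := by
    intro k
    set c : ℝ := L + 1/((k:ℝ)+1) with hc
    have hk1 : 0 < 1/((k:ℝ)+1) := by positivity
    have hc0 : 0 < c := by positivity
    have hLc : L < c := lt_add_of_pos_right L hk1
    have hLd : L ^ (d:ℝ) = 2 / D := by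
      rw [hL, ← Real.rpow_mul (by positivity), one_div_mul_cancel hdne, Real.rpow_one]
    have hγ2 : 2 < D * c ^ (d:ℝ) := by
      have h1 : L ^ (d:ℝ) < c ^ (d:ℝ) := Real.rpow_lt_rpow hL0.le hLc hd0
      rw [hLd] at h1
      have h2 : D * (2/D) < D * c ^ (d:ℝ) := mul_lt_mul_of_pos_left h1 hD0
      rwa [mul_div_cancel₀ 2 hD0.ne'] at h2
    set γ := D * c ^ (d:ℝ) with hγ
    have hγ0 : 0 < γ := by linarith
    set θ := (2 + γ)/(2*γ) with hθ
    have hθ0 : 0 < θ := by positivity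
    have hθ1 : θ < 1 := by
      rw [hθ, div_lt_one (by positivity)]
      linarith
    set υ := θ ^ (1/(d:ℝ)) with hυ
    have hυ0 : 0 < υ := Real.rpow_pos_of_pos hθ0 _
    have hυ1 : υ < 1 := Real.rpow_lt_one hθ0.le hθ1 hinvd
    have hυd : υ ^ (d:ℝ) = θ := by
      rw [hυ, ← Real.rpow_mul hθ0.le, one_div_mul_cancel hdne, Real.rpow_one]
    set β' := (2 + γ)/2 with hβ'
    have hβ'2 : 2 < β' := by rw [hβ']; linarith
    have hγθ : γ * θ = β' := by
      rw [hθ, hβ']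
      field_simp
    set β := β' - 1 with hβ
    have hβ1 : 1 < β := by rw [hβ]; linarith
    set ε : ℕ → ℝ := fun n => c * (Real.log n / n) ^ (1/(d:ℝ)) with hε
    have htend : Tendsto ε atTop (nhds 0) := by
      have h1 : Tendsto (fun y : ℝ => Real.log y / y) atTop (nhds 0) :=
        Real.isLittleO_log_id_atTop.tendsto_div_nhds_zero
      have h2 : Tendsto (fun n : ℕ => Real.log n / n) atTop (nhds 0) :=
        h1.comp tendsto_natCast_atTop_atTop
      have h3 : Tendsto (fun n : ℕ => (Real.log n / n) ^ (1/(d:ℝ))) atTop (nhds 0) := by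
        have := h2.rpow_const (p := 1/(d:ℝ)) (Or.inr hinvd.le)
        rwa [Real.zero_rpow (ne_of_gt hinvd)] at this
      have h4 := h3.const_mul c
      rwa [mul_zero] at h4
    obtain ⟨N₀, hN₀⟩ := eventually_atTop.1
      ((htend.eventually_lt_const hlam).and (eventually_ge_atTop 3))
    set Es : ℕ → Set Ω := fun n =>
      {ω | ε n < Metric.hausdorffDist (Set.range fun i : Fin n => X i.1 ω) S} with hEs
    set W : ℝ := (D * ((1 - υ) * c / 2) ^ (d:ℝ))⁻¹ with hW
    have hυ1' : (0:ℝ) < 1 - υ := by linarith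
    have hW0 : 0 < W := by
      rw [hW]
      have h : (0:ℝ) < (1 - υ) * c / 2 := by positivity
      positivity
    set b : ℕ → ℝ := fun n => W * ((n:ℝ) / Real.log n) * ((1 + αn n) * (n:ℝ) ^ (-β')) with hb
    have key : ∀ n, N₀ ≤ n → P (Es n) ≤ ENNReal.ofReal (b n) := by
      intro n hn
      obtain ⟨hεlam, hn3⟩ := hN₀ n hn
      have hnpos : 0 < n := by omega
      have hnR : (0:ℝ) < n := by exact_mod_cast hnpos
      have hlogn : 0 < Real.log n := Real.log_pos (by exact_mod_cast (by omega : 1 < n))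
      set x := Real.log n / n with hx
      have hx0 : 0 < x := div_pos hlogn hnR
      have hx1d : (x ^ (1/(d:ℝ))) ^ (d:ℝ) = x := by
        rw [← Real.rpow_mul hx0.le, one_div_mul_cancel hdne, Real.rpow_one]
      have hε0 : 0 < ε n := by
        have hxp : 0 < x ^ (1/(d:ℝ)) := Real.rpow_pos_of_pos hx0 _
        rw [hε]
        exact mul_pos hc0 hxp
      set ρ₁ := (1 - υ) * ε n with hρ₁
      set ρ₂ := υ * ε n with hρ₂
      have hρ₁0 : 0 < ρ₁ := mul_pos hυ1' hε0
      have hρ₂0 : 0 < ρ₂ := mul_pos hυ0 hε0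
      have hρ₂lam : ρ₂ ≤ lam := by
        have h1 : ρ₂ ≤ ε n := by
          rw [hρ₂]
          exact mul_le_of_le_one_left hε0.le hυ1.le
        linarith [hεlam]
      have hρ₁half0 : 0 < ρ₁/2 := by positivity
      have hρ₁2lam : ρ₁/2 ≤ lam := by
        have h1 : ρ₁ ≤ ε n := by
          rw [hρ₁]
          exact mul_le_of_le_one_left hε0.le (by linarith)
        linarith [hεlam]
      have hballlow : ∀ s ∈ S,
          ENNReal.ofReal (D * (ρ₁/2) ^ (d:ℝ)) ≤ ν (Metric.closedBall s (ρ₁/2)) := by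
        intro s hs
        have h1 := hstd s hs (ρ₁/2) hρ₁half0 hρ₁2lam
        rwa [← Real.rpow_natCast (ρ₁/2) d] at h1
      have c₀pos : 0 < D * (ρ₁/2) ^ (d:ℝ) := by positivity
      obtain ⟨T, hTS, hTnet, hTcard⟩ :=
        cover_lemma S ν (ρ₁/2) _ hρ₁half0 c₀pos hballlow
      have hincl : Es n ∩ {ω | ∀ i, X i ω ∈ S} ⊆
          ⋃ t ∈ T, {ω | ∀ i : Fin n, X i.1 ω ∈ (Metric.closedBall t ρ₂)ᶜ} := by
        rintro ω ⟨hω1, hω2⟩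
        simp only [Set.mem_iUnion, Set.mem_setOf_eq]
        by_contra hcon
        push_neg at hcon
        have hgood : ∀ t ∈ T, ∃ i : Fin n, X i.1 ω ∈ Metric.closedBall t ρ₂ := by
          intro t ht
          obtain ⟨i, hi⟩ := hcon t ht
          exact ⟨i, by simpa using hi⟩
        have hdH : Metric.hausdorffDist (Set.range fun i : Fin n => X i.1 ω) S ≤ ε n := by
          apply Metric.hausdorffDist_le_of_mem_dist hε0.le
          · rintro _ ⟨i, rfl⟩
            exact ⟨X i.1 ω, hω2 i.1, by simp [hε0.le]⟩
          · intro s hs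
            obtain ⟨t, htT, hst⟩ := hTnet s hs
            obtain ⟨i, hi⟩ := hgood t htT
            refine ⟨X i.1 ω, Set.mem_range_self i, ?_⟩
            have h2 : dist (X i.1 ω) t ≤ ρ₂ := Metric.mem_closedBall.1 hi
            calc dist s (X i.1 ω) ≤ dist s t + dist t (X i.1 ω) := dist_triangle _ _ _
              _ ≤ 2 * (ρ₁/2) + ρ₂ := add_le_add hst (by rw [dist_comm]; exact h2)
              _ = ε n := by rw [hρ₁, hρ₂]; ring
        exact absurd hω1 (not_lt.2 hdH)
      set q : ℝ := Real.exp (-((n:ℝ) * (D * ρ₂ ^ (d:ℝ)))) with hq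
      have hq0 : 0 < q := Real.exp_pos _
      have hνA : ∀ t ∈ T, ν ((Metric.closedBall t ρ₂)ᶜ)
          ≤ ENNReal.ofReal (Real.exp (-(D * ρ₂ ^ (d:ℝ)))) := by
        intro t ht
        have hball := hstd t (hTS ht) ρ₂ hρ₂0 hρ₂lam
        rw [← Real.rpow_natCast ρ₂ d] at hball
        set y := D * ρ₂ ^ (d:ℝ) with hy
        have hy0 : (0:ℝ) ≤ y := by positivity
        have hy1 : y ≤ 1 := ENNReal.ofReal_le_one.mp (hball.trans prob_le_one)
        calc ν ((Metric.closedBall t ρ₂)ᶜ)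
            = 1 - ν (Metric.closedBall t ρ₂) := prob_compl_eq_one_sub measurableSet_closedBall
          _ ≤ 1 - ENNReal.ofReal y := tsub_le_tsub_left hball 1
          _ ≤ ENNReal.ofReal (1 - y) := by
              rw [tsub_le_iff_right, ← ENNReal.ofReal_add (by linarith) hy0]
              simp
          _ ≤ ENNReal.ofReal (Real.exp (-y)) :=
              ENNReal.ofReal_le_ofReal (by linarith [Real.add_one_le_exp (-y)])
      obtain ⟨fj, g, hfj, hg, hle⟩ := hAI n
      have hballP : ∀ t ∈ T,
          P {ω | ∀ i : Fin n, X i.1 ω ∈ (Metric.closedBall t ρ₂)ᶜ}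
            ≤ ENNReal.ofReal ((1 + αn n) * q) := by
        intro t ht
        have h1 := ball_bound P X hX ν hmarg αn n hnpos fj g hfj hg hle
          ((Metric.closedBall t ρ₂)ᶜ) measurableSet_closedBall.compl
        refine h1.trans ?_
        have h2 : (ν ((Metric.closedBall t ρ₂)ᶜ)) ^ n ≤ ENNReal.ofReal q := by
          calc (ν ((Metric.closedBall t ρ₂)ᶜ)) ^ n
              ≤ (ENNReal.ofReal (Real.exp (-(D * ρ₂ ^ (d:ℝ))))) ^ n :=
                pow_le_pow_left' (hνA t ht) n
            _ = ENNReal.ofReal ((Real.exp (-(D * ρ₂ ^ (d:ℝ)))) ^ n) :=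
                (ENNReal.ofReal_pow (Real.exp_pos _).le n).symm
            _ = ENNReal.ofReal q := by
                rw [hq, ← Real.exp_nat_mul]
                congr 1
                ring
        calc ENNReal.ofReal (1 + αn n) * (ν ((Metric.closedBall t ρ₂)ᶜ)) ^ n
            ≤ ENNReal.ofReal (1 + αn n) * ENNReal.ofReal q := mul_le_mul_right h2 _
          _ = ENNReal.ofReal ((1 + αn n) * q) :=
              (ENNReal.ofReal_mul (by linarith [hα n])).symm
      have hPEs : P (Es n) ≤ (T.card : ℝ≥0∞) * ENNReal.ofReal ((1 + αn n) * q) := by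
        calc P (Es n)
            ≤ P ((Es n ∩ {ω | ∀ i, X i ω ∈ S}) ∪ {ω | ∀ i, X i ω ∈ S}ᶜ) := by
              apply measure_mono
              intro ω hw
              by_cases h : ω ∈ {ω | ∀ i, X i ω ∈ S}
              · exact Or.inl ⟨hw, h⟩
              · exact Or.inr h
          _ ≤ P (Es n ∩ {ω | ∀ i, X i ω ∈ S}) + P ({ω | ∀ i, X i ω ∈ S}ᶜ) :=
              measure_union_le _ _
          _ = P (Es n ∩ {ω | ∀ i, X i ω ∈ S}) := by rw [hSall0, add_zero]
          _ ≤ P (⋃ t ∈ T, {ω | ∀ i : Fin n, X i.1 ω ∈ (Metric.closedBall t ρ₂)ᶜ}) :=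
              measure_mono hincl
          _ ≤ ∑ t ∈ T, P {ω | ∀ i : Fin n, X i.1 ω ∈ (Metric.closedBall t ρ₂)ᶜ} :=
              measure_biUnion_finset_le T _
          _ ≤ ∑ _t ∈ T, ENNReal.ofReal ((1 + αn n) * q) :=
              Finset.sum_le_sum hballP
          _ = (T.card : ℝ≥0∞) * ENNReal.ofReal ((1 + αn n) * q) := by
              rw [Finset.sum_const, nsmul_eq_mul]
      have hcardR : (T.card : ℝ) ≤ (D * (ρ₁/2) ^ (d:ℝ))⁻¹ := by
        rw [← one_div, le_div_iff₀ c₀pos]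
        exact hTcard
      have hcard : (T.card : ℝ≥0∞) ≤ ENNReal.ofReal ((D * (ρ₁/2) ^ (d:ℝ))⁻¹) := by
        rw [← ENNReal.ofReal_natCast]
        exact ENNReal.ofReal_le_ofReal hcardR
      have hfinal : P (Es n)
          ≤ ENNReal.ofReal ((D * (ρ₁/2) ^ (d:ℝ))⁻¹ * ((1 + αn n) * q)) := by
        rw [ENNReal.ofReal_mul (by positivity)]
        exact hPEs.trans (mul_le_mul_left hcard _)
      have hρ₁half : ρ₁/2 = ((1 - υ) * c / 2) * x ^ (1/(d:ℝ)) := by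
        rw [hρ₁, hε]; ring
      have hA1 : (0:ℝ) < (1 - υ) * c / 2 := by positivity
      have hc₀x : D * (ρ₁/2) ^ (d:ℝ) = W⁻¹ * x := by
        rw [hρ₁half, Real.mul_rpow hA1.le (Real.rpow_nonneg hx0.le _), hx1d, hW, inv_inv]
        ring
      have hinvc₀ : (D * (ρ₁/2) ^ (d:ℝ))⁻¹ = W * ((n:ℝ) / Real.log n) := by
        rw [hc₀x, mul_inv, inv_inv, hx, inv_div]
      have hqeq : q = (n:ℝ) ^ (-β') := by
        have hρ₂x : D * ρ₂ ^ (d:ℝ) = β' * x := by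
          have h1 : ρ₂ = (υ * c) * x ^ (1/(d:ℝ)) := by rw [hρ₂, hε]; ring
          rw [h1, Real.mul_rpow (by positivity) (Real.rpow_nonneg hx0.le _), hx1d,
            Real.mul_rpow hυ0.le hc0.le, hυd, ← hγθ, hγ]
          ring
        rw [hq, hρ₂x, Real.rpow_def_of_pos hnR]
        congr 1
        rw [hx]
        field_simp
      rw [hb]
      rw [hinvc₀, hqeq] at hfinal
      exact hfinal.trans (le_of_eq (by ring))
    -- summability
    have hlog_ge_one : ∀ n : ℕ, 3 ≤ n → 1 ≤ Real.log n := by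
      intro n hn
      have hnR : (3:ℝ) ≤ n := by exact_mod_cast hn
      have h1 : Real.exp 1 < (n:ℝ) := by
        have := Real.exp_one_lt_d9
        linarith
      exact ((Real.lt_log_iff_exp_lt (by linarith [Real.exp_pos 1])).2 h1).le
    set N₁ := max N₀ 3 with hN₁
    set B : ℕ → ℝ := fun n => if n < N₁ then (1:ℝ) else b n with hB
    have hb_nonneg : ∀ n : ℕ, 3 ≤ n → 0 ≤ b n := by
      intro n hn
      have hnR : (0:ℝ) ≤ n := Nat.cast_nonneg n
      have hlog1 : 1 ≤ Real.log n := hlog_ge_one n hn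
      have h1 : (0:ℝ) ≤ (n:ℝ)/Real.log n := div_nonneg hnR (by linarith)
      have h2 : (0:ℝ) ≤ 1 + αn n := by linarith [hα n]
      have h3 : (0:ℝ) ≤ (n:ℝ) ^ (-β') := Real.rpow_nonneg hnR _
      rw [hb]
      exact mul_nonneg (mul_nonneg hW0.le h1) (mul_nonneg h2 h3)
    have hB_nonneg : ∀ n, 0 ≤ B n := by
      intro n
      rw [hB]
      dsimp only
      split
      · exact zero_le_one
      · next h => exact hb_nonneg n (by omega)
    set w : ℕ → ℝ := fun n => (if n < N₁ then (1:ℝ) else 0)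
      + W * ((n:ℝ) ^ (-β) + αn n / ((n:ℝ) ^ β * Real.log n)) with hw
    have hwsum : Summable w := by
      apply Summable.add
      · apply summable_of_ne_finset_zero (s := Finset.range N₁)
        intro n hn
        rw [Finset.mem_range] at hn
        rw [if_neg hn]
      · exact Summable.mul_left W
          ((Real.summable_nat_rpow.2 (by linarith)).add (hsum β hβ1))
    have hBle : ∀ n, B n ≤ w n := by
      intro n
      rw [hB, hw]
      dsimp only
      have hterm_nonneg : (0:ℝ) ≤ (n:ℝ) ^ (-β) + αn n / ((n:ℝ) ^ β * Real.log n) := by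
        have h2 : (0:ℝ) ≤ (n:ℝ) ^ (-β) := Real.rpow_nonneg (Nat.cast_nonneg n) _
        have h3 : (0:ℝ) ≤ αn n / ((n:ℝ) ^ β * Real.log n) :=
          div_nonneg (hα n) (mul_nonneg (Real.rpow_nonneg (Nat.cast_nonneg n) _)
            (Real.log_natCast_nonneg n))
        linarith
      by_cases h : n < N₁
      · rw [if_pos h, if_pos h]
        linarith [mul_nonneg hW0.le hterm_nonneg]
      · rw [if_neg h, if_neg h]
        have hn3 : 3 ≤ n := by omega
        have hnR : (0:ℝ) < n := by exact_mod_cast (by omega : 0 < n)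
        have hlog1 : 1 ≤ Real.log n := hlog_ge_one n hn3
        have hlog0 : 0 < Real.log n := by linarith
        have hpow : (n:ℝ) * (n:ℝ) ^ (-β') = (n:ℝ) ^ (-β) := by
          calc (n:ℝ) * (n:ℝ) ^ (-β') = (n:ℝ) ^ (1:ℝ) * (n:ℝ) ^ (-β') := by
                rw [Real.rpow_one]
            _ = (n:ℝ) ^ (1 + -β') := (Real.rpow_add hnR 1 (-β')).symm
            _ = (n:ℝ) ^ (-β) := by congr 1; rw [hβ]; ring
        have hbn : b n = W * ((1 + αn n) * ((n:ℝ) * (n:ℝ) ^ (-β')) / Real.log n) := by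
          rw [hb]
          field_simp
        rw [hbn, hpow]
        have hterm2 : αn n * (n:ℝ) ^ (-β) / Real.log n
            = αn n / ((n:ℝ) ^ β * Real.log n) := by
          rw [Real.rpow_neg hnR.le]
          field_simp
        have hterm1 : (n:ℝ) ^ (-β) / Real.log n ≤ (n:ℝ) ^ (-β) :=
          div_le_self (Real.rpow_nonneg hnR.le _) hlog1
        have hsplit : (1 + αn n) * (n:ℝ) ^ (-β) / Real.log n
            = (n:ℝ) ^ (-β) / Real.log n + αn n * (n:ℝ) ^ (-β) / Real.log n := by ring
        have hmid : (1 + αn n) * (n:ℝ) ^ (-β) / Real.log n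
            ≤ (n:ℝ) ^ (-β) + αn n / ((n:ℝ) ^ β * Real.log n) := by
          rw [hsplit, hterm2]
          exact add_le_add hterm1 le_rfl
        have := mul_le_mul_of_nonneg_left hmid hW0.le
        linarith
    have hBsum : Summable B := Summable.of_nonneg_of_le hB_nonneg hBle hwsum
    have hPB : ∀ n, P (Es n) ≤ ENNReal.ofReal (B n) := by
      intro n
      rw [hB]
      dsimp only
      by_cases h : n < N₁
      · rw [if_pos h]
        simpa using prob_le_one
      · rw [if_neg h]
        exact key n (by omega)
    have htsum : (∑' n, P (Es n)) ≠ ⊤ := by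
      have h1 : (∑' n, P (Es n)) ≤ ∑' n, ENNReal.ofReal (B n) := ENNReal.tsum_le_tsum hPB
      rw [← ENNReal.ofReal_tsum_of_nonneg hB_nonneg hBsum] at h1
      exact (h1.trans_lt ENNReal.ofReal_lt_top).ne
    have hae := MeasureTheory.ae_eventually_notMem htsum
    filter_upwards [hae, hEall] with ω h1 h2
    apply Filter.limsup_le_of_le
    · apply Filter.isCoboundedUnder_le_of_le atTop (x := 0)
      intro n
      exact mul_nonneg
        (Real.rpow_nonneg (div_nonneg (Nat.cast_nonneg n) (Real.log_natCast_nonneg n)) _)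
        Metric.hausdorffDist_nonneg
    · filter_upwards [h1, eventually_ge_atTop (max 3 N₀)] with n hn1 hn3
      have h3n : 3 ≤ n := le_trans (le_max_left _ _) hn3
      have hnR : (0:ℝ) < n := by exact_mod_cast (by omega : 0 < n)
      have hlog : 0 < Real.log n := Real.log_pos (by exact_mod_cast (by omega : 1 < n))
      have hdH : Metric.hausdorffDist (Set.range fun i : Fin n => X i.1 ω) S ≤ ε n := by
        simp only [hEs, Set.mem_setOf_eq, not_lt] at hn1
        exact hn1
      calc ((n:ℝ)/Real.log n) ^ (1/(d:ℝ)) *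
            Metric.hausdorffDist (Set.range fun i : Fin n => X i.1 ω) S
          ≤ ((n:ℝ)/Real.log n) ^ (1/(d:ℝ)) * ε n :=
            mul_le_mul_of_nonneg_left hdH (Real.rpow_nonneg (by positivity) _)
        _ = c := by
            rw [hε]
            rw [show ((n:ℝ)/Real.log n) ^ (1/(d:ℝ)) * (c * (Real.log n/(n:ℝ)) ^ (1/(d:ℝ)))
              = c * (((n:ℝ)/Real.log n) ^ (1/(d:ℝ)) * (Real.log n/(n:ℝ)) ^ (1/(d:ℝ)))
              from by ring]
            rw [← Real.mul_rpow (by positivity) (by positivity)]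
            rw [show ((n:ℝ)/Real.log n) * (Real.log n/(n:ℝ)) = 1 from by
              field_simp]
            rw [Real.one_rpow, mul_one]
  have hall := ae_all_iff.2 main
  filter_upwards [hall] with ω hω
  by_contra hcon
  push_neg at hcon
  obtain ⟨k, hk⟩ := exists_nat_one_div_lt (sub_pos.2 hcon)
  have := hω k
  linarith
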